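/- Let 1 < p < ∞ and α < p - 1, and let f be a non-negative measurable function on (0,∞). Then ∫₀^∞ |H(f)(x)|^p x^α dx ≤ (p/(p-1-α))^p ∫₀^∞ |f(x)|^p x^α dx, and the constant p/(p-1-α) is sharp. -/

import Mathlib

open MeasureTheory Set
open scoped ENNReal

/-- The classical one-dimensional Hardy operator `H f x = (1/x) ∫₀ˣ f`. -/
noncomputable def hardyOp (f : ℝ → ℝ≥0∞) (x : ℝ) : ℝ≥0∞ :=
  (ENNReal.ofReal x)⁻¹ * ∫⁻ t in Ioo (0 : ℝ) x, f t

lemma lint_Ioo_rpow {c x : ℝ} (hc : -1 < c) (hx : 0 < x) :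
    ∫⁻ t in Ioo (0 : ℝ) x, ENNReal.ofReal (t ^ c) = ENNReal.ofReal (x ^ (c + 1) / (c + 1)) := by
  have hInt : IntegrableOn (fun t : ℝ => t ^ c) (Ioo 0 x) := by
    have := (intervalIntegral.intervalIntegrable_rpow' hc (a := 0) (b := x)).1
    exact this.mono_set Ioo_subset_Ioc_self
  rw [← ofReal_integral_eq_lintegral_ofReal hInt]
  · congr 1
    have : ∫ t in Ioo (0:ℝ) x, t ^ c = ∫ t in (0:ℝ)..x, t ^ c := by
      rw [intervalIntegral.integral_of_le hx.le, ← integral_Ioc_eq_integral_Ioo]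
    rw [this, integral_rpow (Or.inl hc)]
    rw [Real.zero_rpow (by linarith)]
    ring
  · filter_upwards [ae_restrict_mem measurableSet_Ioo] with t ht
    exact Real.rpow_nonneg ht.1.le _

lemma lint_Ioi_rpow {γ t : ℝ} (hγ : γ < -1) (ht : 0 < t) :
    ∫⁻ x in Ioi t, ENNReal.ofReal (x ^ γ) = ENNReal.ofReal (t ^ (γ + 1) / (-(γ + 1))) := by
  rw [← ofReal_integral_eq_lintegral_ofReal (integrableOn_Ioi_rpow_of_lt hγ ht)]
  · rw [integral_Ioi_rpow_of_lt hγ ht]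
    rw [div_neg, neg_div]
  · filter_upwards [ae_restrict_mem measurableSet_Ioi] with x hx
    exact Real.rpow_nonneg (ht.trans hx).le _

lemma hardy_swap {γ : ℝ} (hγ : γ < -1) (g : ℝ → ℝ≥0∞) (hg : Measurable g) :
    ∫⁻ x in Ioi (0:ℝ), (∫⁻ t in Ioo (0:ℝ) x, g t) * ENNReal.ofReal (x ^ γ)
      = ∫⁻ t in Ioi (0:ℝ), ENNReal.ofReal (t ^ (γ + 1) / (-(γ + 1))) * g t := by
  have h1 : ∀ x : ℝ, (∫⁻ t in Ioo (0:ℝ) x, g t) * ENNReal.ofReal (x ^ γ)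
      = ∫⁻ t, ENNReal.ofReal (x ^ γ) * (Ioo (0:ℝ) x).indicator g t := by
    intro x
    rw [lintegral_const_mul' _ _ ENNReal.ofReal_ne_top,
      lintegral_indicator measurableSet_Ioo, mul_comm]
  simp_rw [h1]
  have hmeas : AEMeasurable (Function.uncurry fun x t =>
      ENNReal.ofReal (x ^ γ) * (Ioo (0:ℝ) x).indicator g t)
      ((volume.restrict (Ioi (0:ℝ))).prod volume) := by
    have hset : MeasurableSet {z : ℝ × ℝ | 0 < z.2 ∧ z.2 < z.1} :=
      (measurableSet_lt measurable_const measurable_snd).inter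
        (measurableSet_lt measurable_snd measurable_fst)
    have heq : (Function.uncurry fun x t =>
        ENNReal.ofReal (x ^ γ) * (Ioo (0:ℝ) x).indicator g t)
        = fun z : ℝ × ℝ => ENNReal.ofReal (z.1 ^ γ) *
            ({z : ℝ × ℝ | 0 < z.2 ∧ z.2 < z.1}.indicator (fun z => g z.2) z) := by
      funext z
      simp only [Function.uncurry]
      by_cases h : z.2 ∈ Ioo (0:ℝ) z.1
      · rw [indicator_of_mem h, indicator_of_mem (by exact h)]
      · rw [indicator_of_notMem h, indicator_of_notMem (by exact h)]
    rw [heq]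
    exact ((by fun_prop : Measurable fun z : ℝ × ℝ => ENNReal.ofReal (z.1 ^ γ)).mul
      ((hg.comp measurable_snd).indicator hset)).aemeasurable
  rw [lintegral_lintegral_swap hmeas]
  have h2 : ∀ t : ℝ, (∫⁻ x in Ioi (0:ℝ), ENNReal.ofReal (x ^ γ) * (Ioo (0:ℝ) x).indicator g t)
      = (Ioi (0:ℝ)).indicator (fun t => ENNReal.ofReal (t ^ (γ + 1) / (-(γ + 1))) * g t) t := by
    intro t
    by_cases ht : 0 < t
    · have hx : ∀ x : ℝ, ENNReal.ofReal (x ^ γ) * (Ioo (0:ℝ) x).indicator g t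
          = (Ioi t).indicator (fun x => ENNReal.ofReal (x ^ γ) * g t) x := by
        intro x
        rcases lt_or_ge t x with h | h
        · rw [indicator_of_mem (show t ∈ Ioo (0:ℝ) x from ⟨ht, h⟩),
            indicator_of_mem (show x ∈ Ioi t from h)]
        · rw [indicator_of_notMem (show t ∉ Ioo (0:ℝ) x from fun hm => absurd hm.2 (not_lt.2 h)),
            indicator_of_notMem (show x ∉ Ioi t from not_lt.2 h), mul_zero]
      simp_rw [hx]
      rw [lintegral_indicator measurableSet_Ioi,
        Measure.restrict_restrict measurableSet_Ioi,
        inter_eq_self_of_subset_left (Ioi_subset_Ioi ht.le),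
        lintegral_mul_const _ (by fun_prop), lint_Ioi_rpow hγ ht,
        indicator_of_mem (show t ∈ Ioi (0:ℝ) from ht)]
    · have hz : ∀ x : ℝ, (Ioo (0:ℝ) x).indicator g t = 0 :=
        fun x => indicator_of_notMem (fun hm => ht hm.1) _
      simp only [hz, mul_zero, lintegral_zero,
        indicator_of_notMem (show t ∉ Ioi (0:ℝ) from ht)]
  simp_rw [h2]
  rw [lintegral_indicator measurableSet_Ioi]

lemma hardy_ineq (p α : ℝ) (hp : 1 < p) (hα : α < p - 1)
    (f : ℝ → ℝ≥0∞) (hf : Measurable f) :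
    (∫⁻ x in Ioi (0 : ℝ), hardyOp f x ^ p * ENNReal.ofReal (x ^ α))
      ≤ ENNReal.ofReal ((p / (p - 1 - α)) ^ p) *
        ∫⁻ x in Ioi (0 : ℝ), f x ^ p * ENNReal.ofReal (x ^ α) := by
  have hp0 : (0:ℝ) < p := by linarith
  set q : ℝ := p / (p - 1) with hqdef
  have hpq : p.HolderConjugate q := (Real.holderConjugate_iff_eq_conjExponent hp).2 rfl
  have hq0 : (0:ℝ) < q := hpq.symm.pos
  set β : ℝ := (α + 1) / p with hβdef
  have hβ1 : β < 1 := by rw [hβdef, div_lt_one hp0]; linarith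
  have h1β : (0:ℝ) < 1 - β := by linarith
  have h1βeq : 1 - β = (p - 1 - α) / p := by
    rw [hβdef]; field_simp; ring
  set m : ℝ := β * (p - 1) with hmdef
  set γ : ℝ := α - p + (1 - β) * (p - 1) with hγdef
  have hγ1 : γ + 1 = -(1 - β) := by
    rw [hγdef, hβdef]; field_simp; ring
  have hγlt : γ < -1 := by
    have : γ + 1 < 0 := by rw [hγ1]; linarith
    linarith
  -- the weighted integrand on the right
  set g : ℝ → ℝ≥0∞ := fun t => f t ^ p * ENNReal.ofReal (t ^ m) with hgdef
  have hg : Measurable g := by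
    apply (hf.pow_const _).mul
    fun_prop
  set K : ℝ := (1 / (1 - β)) ^ (p - 1) with hKdef
  have hK0 : 0 < K := Real.rpow_pos_of_pos (by positivity) _
  -- Step 1: pointwise bound via Hölder
  have step1 : ∀ x : ℝ, 0 < x →
      hardyOp f x ^ p * ENNReal.ofReal (x ^ α)
        ≤ ENNReal.ofReal K * ((∫⁻ t in Ioo (0:ℝ) x, g t) * ENNReal.ofReal (x ^ γ)) := by
    intro x hx
    -- Hölder on (0, x)
    have holder : (∫⁻ t in Ioo (0:ℝ) x, f t)
        ≤ (∫⁻ t in Ioo (0:ℝ) x, g t) ^ (1/p)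
          * (ENNReal.ofReal (x ^ (1 - β) / (1 - β))) ^ (1/q) := by
      have hmb : -(m/p) * q = -β := by
        have h1 : p - 1 ≠ 0 := by linarith
        rw [hmdef, hqdef, hβdef]; field_simp
      have key := ENNReal.lintegral_mul_le_Lp_mul_Lq (volume.restrict (Ioo (0:ℝ) x)) hpq
        (f := fun t => f t * ENNReal.ofReal (t ^ (m/p)))
        (g := fun t => ENNReal.ofReal (t ^ (-(m/p))))
        (by fun_prop) (by fun_prop)
      have e1 : (∫⁻ t in Ioo (0:ℝ) x, f t)
          = ∫⁻ t in Ioo (0:ℝ) x,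
              ((fun t => f t * ENNReal.ofReal (t ^ (m/p))) * fun t => ENNReal.ofReal (t ^ (-(m/p)))) t := by
        refine setLIntegral_congr_fun measurableSet_Ioo ?_
        intro t ht
        simp only [Pi.mul_apply]
        rw [mul_assoc, ← ENNReal.ofReal_mul (Real.rpow_nonneg ht.1.le _),
          ← Real.rpow_add ht.1, add_neg_cancel, Real.rpow_zero, ENNReal.ofReal_one, mul_one]
      have e2 : (∫⁻ t in Ioo (0:ℝ) x, (f t * ENNReal.ofReal (t ^ (m/p))) ^ p)
          = ∫⁻ t in Ioo (0:ℝ) x, g t := by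
        refine setLIntegral_congr_fun measurableSet_Ioo ?_
        intro t ht
        dsimp only
        rw [ENNReal.mul_rpow_of_nonneg _ _ hp0.le, ENNReal.ofReal_rpow_of_pos
          (Real.rpow_pos_of_pos ht.1 _), ← Real.rpow_mul ht.1.le,
          div_mul_cancel₀ _ hp0.ne']
      have e3 : (∫⁻ t in Ioo (0:ℝ) x, ENNReal.ofReal (t ^ (-(m/p))) ^ q)
          = ENNReal.ofReal (x ^ (1 - β) / (1 - β)) := by
        have : (∫⁻ t in Ioo (0:ℝ) x, ENNReal.ofReal (t ^ (-(m/p))) ^ q)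
            = ∫⁻ t in Ioo (0:ℝ) x, ENNReal.ofReal (t ^ (-β)) := by
          refine setLIntegral_congr_fun measurableSet_Ioo ?_
          intro t ht
          dsimp only
          rw [ENNReal.ofReal_rpow_of_pos (Real.rpow_pos_of_pos ht.1 _),
            ← Real.rpow_mul ht.1.le, hmb]
        rw [this, lint_Ioo_rpow (by linarith) hx, show -β + 1 = 1 - β by ring]
      rw [e1]
      refine key.trans (le_of_eq ?_)
      rw [e2, e3]
    set A : ℝ≥0∞ := ∫⁻ t in Ioo (0:ℝ) x, g t with hAdef
    set B : ℝ≥0∞ := ENNReal.ofReal (x ^ (1 - β) / (1 - β)) with hBdef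
    have hBpos : (0:ℝ) < x ^ (1 - β) / (1 - β) := by positivity
    have realcalc : x ^ (-p) * (x ^ (1 - β) / (1 - β)) ^ (p - 1) * x ^ α = K * x ^ γ := by
      have h1 : (x ^ (1 - β) / (1 - β)) ^ (p - 1)
          = x ^ ((1 - β) * (p - 1)) * K := by
        rw [div_eq_mul_inv, ← one_div,
          Real.mul_rpow (Real.rpow_nonneg hx.le _) (by positivity),
          ← Real.rpow_mul hx.le, hKdef]
      rw [h1, hKdef]
      rw [show x ^ (-p) * (x ^ ((1 - β) * (p - 1)) * (1 / (1 - β)) ^ (p - 1)) * x ^ α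
          = (1 / (1 - β)) ^ (p - 1) * (x ^ (-p) * x ^ ((1 - β) * (p - 1)) * x ^ α) by ring,
        ← Real.rpow_add hx, ← Real.rpow_add hx]
      congr 1
      rw [hγdef]; ring
    calc hardyOp f x ^ p * ENNReal.ofReal (x ^ α)
        ≤ ((ENNReal.ofReal x)⁻¹ * (A ^ (1/p) * B ^ (1/q))) ^ p * ENNReal.ofReal (x ^ α) := by
          exact mul_le_mul_left
            (ENNReal.rpow_le_rpow (mul_le_mul_right holder _) hp0.le) _
      _ = A * (ENNReal.ofReal (x ^ (-p)) * B ^ (p - 1) * ENNReal.ofReal (x ^ α)) := by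
          rw [ENNReal.mul_rpow_of_nonneg _ _ hp0.le, ENNReal.mul_rpow_of_nonneg _ _ hp0.le,
            ← ENNReal.rpow_mul, ← ENNReal.rpow_mul,
            one_div, inv_mul_cancel₀ hp0.ne', ENNReal.rpow_one,
            show (1:ℝ)/q * p = p - 1 by rw [hqdef, one_div_div, div_mul_cancel₀ _ hp0.ne'],
            ENNReal.inv_rpow, ENNReal.ofReal_rpow_of_pos hx,
            ← ENNReal.ofReal_inv_of_pos (Real.rpow_pos_of_pos hx _),
            ← Real.rpow_neg hx.le]
          ring
      _ = ENNReal.ofReal K * (A * ENNReal.ofReal (x ^ γ)) := by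
          rw [hBdef, ENNReal.ofReal_rpow_of_pos hBpos,
            ← ENNReal.ofReal_mul (Real.rpow_nonneg hx.le _),
            ← ENNReal.ofReal_mul (by positivity), realcalc,
            ENNReal.ofReal_mul hK0.le]
          ring
  -- Step 2: integrate the pointwise bound and swap the order of integration
  have hconst : ENNReal.ofReal K * ENNReal.ofReal ((1:ℝ)/(1 - β))
      = ENNReal.ofReal ((p / (p - 1 - α)) ^ p) := by
    rw [← ENNReal.ofReal_mul hK0.le, hKdef]
    congr 1
    rw [Real.rpow_sub (by positivity), Real.rpow_one,
      div_mul_cancel₀ _ (ne_of_gt (by positivity)), h1βeq, one_div_div]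
  calc (∫⁻ x in Ioi (0 : ℝ), hardyOp f x ^ p * ENNReal.ofReal (x ^ α))
      ≤ ∫⁻ x in Ioi (0:ℝ), ENNReal.ofReal K * ((∫⁻ t in Ioo (0:ℝ) x, g t) * ENNReal.ofReal (x ^ γ)) := by
        refine lintegral_mono_ae ?_
        filter_upwards [ae_restrict_mem measurableSet_Ioi] with x hx
        exact step1 x hx
    _ = ENNReal.ofReal K * ∫⁻ x in Ioi (0:ℝ), (∫⁻ t in Ioo (0:ℝ) x, g t) * ENNReal.ofReal (x ^ γ) :=
        lintegral_const_mul' _ _ ENNReal.ofReal_ne_top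
    _ = ENNReal.ofReal K * ∫⁻ t in Ioi (0:ℝ), ENNReal.ofReal (t ^ (γ + 1) / (-(γ + 1))) * g t := by
        rw [hardy_swap hγlt g hg]
    _ = ∫⁻ t in Ioi (0:ℝ), ENNReal.ofReal K * (ENNReal.ofReal (t ^ (γ + 1) / (-(γ + 1))) * g t) :=
        (lintegral_const_mul' _ _ ENNReal.ofReal_ne_top).symm
    _ = ∫⁻ t in Ioi (0:ℝ), ENNReal.ofReal ((p / (p - 1 - α)) ^ p) * (f t ^ p * ENNReal.ofReal (t ^ α)) := by
        refine setLIntegral_congr_fun measurableSet_Ioi ?_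
        intro t ht
        have ht0 : (0:ℝ) < t := ht
        rw [hgdef]
        simp only []
        rw [show t ^ (γ + 1) / (-(γ + 1)) = t ^ (γ + 1) * ((1:ℝ)/(1 - β)) by
            rw [hγ1]; ring,
          ENNReal.ofReal_mul (Real.rpow_nonneg ht0.le _)]
        rw [show ENNReal.ofReal K * (ENNReal.ofReal (t ^ (γ + 1)) * ENNReal.ofReal ((1:ℝ)/(1 - β)) *
              (f t ^ p * ENNReal.ofReal (t ^ m)))
            = (ENNReal.ofReal K * ENNReal.ofReal ((1:ℝ)/(1 - β))) *
              (f t ^ p * (ENNReal.ofReal (t ^ (γ + 1)) * ENNReal.ofReal (t ^ m))) by ring,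
          hconst, ← ENNReal.ofReal_mul (Real.rpow_nonneg ht0.le _), ← Real.rpow_add ht0,
          show γ + 1 + m = α by rw [hγ1, hmdef, hβdef]; field_simp; ring]
    _ = ENNReal.ofReal ((p / (p - 1 - α)) ^ p) * ∫⁻ x in Ioi (0:ℝ), f x ^ p * ENNReal.ofReal (x ^ α) :=
        lintegral_const_mul' _ _ ENNReal.ofReal_ne_top

lemma lint_Ioo_one_rpow {c x : ℝ} (hc : -1 < c) (hx : 1 < x) :
    ∫⁻ t in Ioo (1:ℝ) x, ENNReal.ofReal (t ^ c) = ENNReal.ofReal ((x ^ (c + 1) - 1) / (c + 1)) := by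
  have hInt : IntegrableOn (fun t : ℝ => t ^ c) (Ioo 1 x) := by
    have := (intervalIntegral.intervalIntegrable_rpow' hc (a := 1) (b := x)).1
    exact this.mono_set Ioo_subset_Ioc_self
  rw [← ofReal_integral_eq_lintegral_ofReal hInt]
  · congr 1
    have : ∫ t in Ioo (1:ℝ) x, t ^ c = ∫ t in (1:ℝ)..x, t ^ c := by
      rw [intervalIntegral.integral_of_le hx.le, ← integral_Ioc_eq_integral_Ioo]
    rw [this, integral_rpow (Or.inl hc), Real.one_rpow]
  · filter_upwards [ae_restrict_mem measurableSet_Ioo] with t ht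
    exact Real.rpow_nonneg (by linarith [ht.1] : (0:ℝ) ≤ t) _

lemma hardy_lower (p α : ℝ) (hp : 1 < p) (hα : α < p - 1) (C : ℝ≥0∞)
    (hC : ∀ f : ℝ → ℝ≥0∞, Measurable f →
      (∫⁻ x in Ioi (0 : ℝ), hardyOp f x ^ p * ENNReal.ofReal (x ^ α))
        ≤ C ^ p * ∫⁻ x in Ioi (0 : ℝ), f x ^ p * ENNReal.ofReal (x ^ α))
    {ε R : ℝ} (hε : 0 < ε) (hε2 : ε < p - 1 - α) (hR : 1 < R) :
    ENNReal.ofReal ((1 - R ^ (-((p - 1 - α - ε) / p))) / ((p - 1 - α - ε) / p)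
      * R ^ (-(ε / p))) ≤ C := by
  have hp0 : (0:ℝ) < p := by linarith
  have hR0 : (0:ℝ) < R := by linarith
  set δ : ℝ := (p - 1 - α - ε) / p with hδdef
  have hδ0 : 0 < δ := by exact div_pos (by linarith) hp0
  set s : ℝ := (1 + α + ε) / p with hsdef
  have hsδ : -s + 1 = δ := by rw [hsdef, hδdef]; field_simp; ring
  have hs1 : -1 < -s := by
    have : s < 1 := by rw [hsdef, div_lt_one hp0]; linarith
    linarith
  set c : ℝ := 1 - R ^ (-δ) with hcdef
  have hc0 : 0 < c := by
    rw [hcdef, sub_pos]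
    exact Real.rpow_lt_one_of_one_lt_of_neg hR (by linarith)
  set f : ℝ → ℝ≥0∞ := (Ioi (1:ℝ)).indicator (fun t => ENNReal.ofReal (t ^ (-s))) with hfdef
  have hfm : Measurable f := Measurable.indicator (by fun_prop) measurableSet_Ioi
  -- value of the right-hand side
  have hRHS : (∫⁻ x in Ioi (0 : ℝ), f x ^ p * ENNReal.ofReal (x ^ α))
      = ENNReal.ofReal (1 / ε) := by
    have hpt : ∀ x : ℝ, f x ^ p * ENNReal.ofReal (x ^ α)
        = (Ioi (1:ℝ)).indicator (fun x => ENNReal.ofReal (x ^ (-1 - ε))) x := by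
      intro x
      by_cases h : x ∈ Ioi (1:ℝ)
      · have hx0 : (0:ℝ) < x := lt_trans one_pos h
        rw [hfdef, indicator_of_mem h, indicator_of_mem h,
          ENNReal.ofReal_rpow_of_pos (Real.rpow_pos_of_pos hx0 _),
          ← Real.rpow_mul hx0.le, ← ENNReal.ofReal_mul (Real.rpow_nonneg hx0.le _),
          ← Real.rpow_add hx0]
        congr 2
        rw [hsdef]; field_simp; ring
      · rw [hfdef, indicator_of_notMem h, indicator_of_notMem h,
          ENNReal.zero_rpow_of_pos hp0, zero_mul]
    simp_rw [hpt]
    rw [lintegral_indicator measurableSet_Ioi, Measure.restrict_restrict measurableSet_Ioi,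
      inter_eq_self_of_subset_left (Ioi_subset_Ioi zero_le_one),
      lint_Ioi_rpow (by linarith) one_pos,
      show (-1 - ε + 1 : ℝ) = -ε by ring, Real.one_rpow, neg_neg]
  -- value of the Hardy operator for x > 1
  have hop : ∀ x : ℝ, 1 < x → hardyOp f x = ENNReal.ofReal (x⁻¹ * ((x ^ δ - 1) / δ)) := by
    intro x hx1
    have hx0 : (0:ℝ) < x := lt_trans one_pos hx1
    have hinner : (∫⁻ t in Ioo (0:ℝ) x, f t) = ENNReal.ofReal ((x ^ δ - 1) / δ) := by
      rw [hfdef]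
      rw [lintegral_indicator measurableSet_Ioi, Measure.restrict_restrict measurableSet_Ioi,
        show Ioi (1:ℝ) ∩ Ioo 0 x = Ioo 1 x by
          ext t; simp only [mem_inter_iff, mem_Ioi, mem_Ioo]
          constructor
          · rintro ⟨h1, _, h2⟩; exact ⟨h1, h2⟩
          · rintro ⟨h1, h2⟩; exact ⟨h1, lt_trans one_pos h1, h2⟩,
        lint_Ioo_one_rpow hs1 hx1, hsδ]
    rw [hardyOp, hinner, ← ENNReal.ofReal_inv_of_pos hx0,
      ← ENNReal.ofReal_mul (by positivity)]
  -- pointwise lower bound for x > R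
  have hlow : ∀ x : ℝ, x ∈ Ioi R →
      ENNReal.ofReal ((c / δ) ^ p) * ENNReal.ofReal (x ^ (-1 - ε))
        ≤ hardyOp f x ^ p * ENNReal.ofReal (x ^ α) := by
    intro x hx
    have hRx : R < x := hx
    have hx1 : 1 < x := lt_trans hR hRx
    have hx0 : (0:ℝ) < x := lt_trans one_pos hx1
    have hreal : c / δ * x ^ (δ - 1) ≤ x⁻¹ * ((x ^ δ - 1) / δ) := by
      have key : c * x ^ δ ≤ x ^ δ - 1 := by
        have h1 : (1:ℝ) = R ^ (-δ) * R ^ δ := by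
          rw [← Real.rpow_add hR0, neg_add_cancel, Real.rpow_zero]
        have h2 : R ^ (-δ) * R ^ δ ≤ R ^ (-δ) * x ^ δ :=
          mul_le_mul_of_nonneg_left (Real.rpow_le_rpow hR0.le hRx.le hδ0.le)
            (Real.rpow_nonneg hR0.le _)
        have h3 : (1:ℝ) ≤ R ^ (-δ) * x ^ δ := h1.le.trans h2
        rw [hcdef]
        nlinarith
      have h4 : x ^ (δ - 1) = x⁻¹ * x ^ δ := by
        rw [show δ - 1 = -1 + δ by ring, Real.rpow_add hx0, Real.rpow_neg_one]
      rw [h4]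
      rw [show c / δ * (x⁻¹ * x ^ δ) = x⁻¹ * (c * x ^ δ / δ) by ring]
      gcongr
    calc ENNReal.ofReal ((c / δ) ^ p) * ENNReal.ofReal (x ^ (-1 - ε))
        = ENNReal.ofReal (c / δ * x ^ (δ - 1)) ^ p * ENNReal.ofReal (x ^ α) := by
          rw [ENNReal.ofReal_rpow_of_pos (by positivity),
            Real.mul_rpow (by positivity) (Real.rpow_nonneg hx0.le _),
            ← Real.rpow_mul hx0.le,
            ← ENNReal.ofReal_mul (by positivity),
            ← ENNReal.ofReal_mul (by positivity), mul_assoc, ← Real.rpow_add hx0]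
          congr 3
          rw [hδdef]; field_simp; ring
      _ ≤ hardyOp f x ^ p * ENNReal.ofReal (x ^ α) := by
          rw [hop x hx1]
          exact mul_le_mul_left (ENNReal.rpow_le_rpow (ENNReal.ofReal_le_ofReal hreal) hp0.le) _
  -- integrate the lower bound
  have hchain : ENNReal.ofReal ((c / δ) ^ p) * ENNReal.ofReal (R ^ (-ε) / ε)
      ≤ C ^ p * ENNReal.ofReal (1 / ε) := by
    calc ENNReal.ofReal ((c / δ) ^ p) * ENNReal.ofReal (R ^ (-ε) / ε)
        = ∫⁻ x in Ioi R, ENNReal.ofReal ((c / δ) ^ p) * ENNReal.ofReal (x ^ (-1 - ε)) := by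
          rw [lintegral_const_mul' _ _ ENNReal.ofReal_ne_top,
            lint_Ioi_rpow (by linarith) hR0,
            show (-1 - ε + 1 : ℝ) = -ε by ring, neg_neg]
      _ ≤ ∫⁻ x in Ioi R, hardyOp f x ^ p * ENNReal.ofReal (x ^ α) := by
          refine lintegral_mono_ae ?_
          filter_upwards [ae_restrict_mem measurableSet_Ioi] with x hx
          exact hlow x hx
      _ ≤ ∫⁻ x in Ioi (0:ℝ), hardyOp f x ^ p * ENNReal.ofReal (x ^ α) :=
          lintegral_mono_set (Ioi_subset_Ioi (by linarith))
      _ ≤ C ^ p * ∫⁻ x in Ioi (0:ℝ), f x ^ p * ENNReal.ofReal (x ^ α) := hC f hfm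
      _ = C ^ p * ENNReal.ofReal (1 / ε) := by rw [hRHS]
  -- cancel and take p-th roots
  have hcancel : ENNReal.ofReal ((c / δ) ^ p * R ^ (-ε)) ≤ C ^ p := by
    have hrw : ENNReal.ofReal ((c / δ) ^ p) * ENNReal.ofReal (R ^ (-ε) / ε)
        = ENNReal.ofReal ((c / δ) ^ p * R ^ (-ε)) * ENNReal.ofReal (1 / ε) := by
      rw [← ENNReal.ofReal_mul (by positivity), ← ENNReal.ofReal_mul (by positivity)]
      congr 1
      ring
    rw [hrw] at hchain
    exact (ENNReal.mul_le_mul_iff_left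
      (ne_of_gt (ENNReal.ofReal_pos.2 (by positivity))) ENNReal.ofReal_ne_top).mp hchain
  have hroot := ENNReal.rpow_le_rpow hcancel (le_of_lt (by positivity : (0:ℝ) < 1 / p))
  rw [← ENNReal.rpow_mul, mul_one_div, div_self hp0.ne', ENNReal.rpow_one,
    ENNReal.ofReal_rpow_of_pos (by positivity),
    Real.mul_rpow (by positivity) (Real.rpow_nonneg hR0.le _),
    ← Real.rpow_mul (by positivity : (0:ℝ) ≤ c / δ), mul_one_div, div_self hp0.ne',
    Real.rpow_one, ← Real.rpow_mul hR0.le, mul_one_div, neg_div] at hroot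
  exact hroot

lemma hardy_sharp (p α : ℝ) (hp : 1 < p) (hα : α < p - 1) (C : ℝ≥0∞)
    (hC : ∀ f : ℝ → ℝ≥0∞, Measurable f →
      (∫⁻ x in Ioi (0 : ℝ), hardyOp f x ^ p * ENNReal.ofReal (x ^ α))
        ≤ C ^ p * ∫⁻ x in Ioi (0 : ℝ), f x ^ p * ENNReal.ofReal (x ^ α)) :
    ENNReal.ofReal (p / (p - 1 - α)) ≤ C := by
  have hp0 : (0:ℝ) < p := by linarith
  set D : ℝ := p - 1 - α with hDdef
  have hD0 : 0 < D := by rw [hDdef]; linarith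
  set e : ℕ → ℝ := fun n => min (1 / ((n:ℝ) + 1) ^ 2) (D / 2) with hedef
  set R : ℕ → ℝ := fun n => Real.exp ((n:ℝ) + 1) with hRdef
  have he0 : ∀ n, 0 < e n := fun n => lt_min (by positivity) (by positivity)
  have heD : ∀ n, e n < D := fun n => lt_of_le_of_lt (min_le_right _ _) (by linarith)
  have hR1 : ∀ n, 1 < R n := fun n => by
    rw [hRdef, show (1:ℝ) = Real.exp 0 by simp]
    exact Real.exp_lt_exp.2 (by positivity)
  set u : ℕ → ℝ := fun n =>
    (1 - R n ^ (-((D - e n) / p))) / ((D - e n) / p) * R n ^ (-(e n / p)) with hudef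
  have hbound : ∀ n, ENNReal.ofReal (u n) ≤ C :=
    fun n => hardy_lower p α hp hα C hC (he0 n) (by linarith [heD n]) (hR1 n)
  -- limits
  have he_lim : Filter.Tendsto e Filter.atTop (nhds 0) := by
    refine squeeze_zero (g := fun n : ℕ => 1 / ((n:ℝ) + 1)) (fun n => (he0 n).le)
      (fun n => ?_) tendsto_one_div_add_atTop_nhds_zero_nat
    exact le_trans (min_le_left _ _) (by
      rw [div_le_div_iff₀ (by positivity) (by positivity)]
      nlinarith [Nat.cast_nonneg (α := ℝ) n])
  have hδ_lim : Filter.Tendsto (fun n => (D - e n) / p) Filter.atTop (nhds (D / p)) := by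
    have := (tendsto_const_nhds (x := D)).sub he_lim
    rw [sub_zero] at this
    exact this.div_const p
  have hRδ_lim : Filter.Tendsto (fun n => R n ^ (-((D - e n) / p))) Filter.atTop (nhds 0) := by
    have heq : (fun n => R n ^ (-((D - e n) / p)))
        = fun (n : ℕ) => Real.exp (-(((n:ℝ) + 1) * ((D - e n) / p))) := by
      funext n
      rw [hRdef, ← Real.exp_mul, mul_neg]
    rw [heq]
    refine Real.tendsto_exp_atBot.comp (Filter.tendsto_neg_atTop_atBot.comp ?_)
    exact Filter.Tendsto.atTop_mul_pos (by positivity : (0:ℝ) < D / p)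
      (Filter.tendsto_atTop_add_const_right _ 1 tendsto_natCast_atTop_atTop) hδ_lim
  have hne_lim : Filter.Tendsto (fun n : ℕ => ((n:ℝ) + 1) * e n) Filter.atTop (nhds 0) := by
    refine squeeze_zero (g := fun n : ℕ => 1 / ((n:ℝ) + 1)) (fun n => by positivity)
      (fun n => ?_) tendsto_one_div_add_atTop_nhds_zero_nat
    calc ((n:ℝ) + 1) * e n ≤ ((n:ℝ) + 1) * (1 / ((n:ℝ) + 1) ^ 2) :=
          mul_le_mul_of_nonneg_left (min_le_left _ _) (by positivity)
      _ = 1 / ((n:ℝ) + 1) := by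
          rw [eq_div_iff (by positivity)]
          field_simp
  have hRε_lim : Filter.Tendsto (fun n => R n ^ (-(e n / p))) Filter.atTop (nhds 1) := by
    have heq : (fun n => R n ^ (-(e n / p)))
        = fun (n : ℕ) => Real.exp (-(((n:ℝ) + 1) * e n / p)) := by
      funext n
      rw [hRdef, ← Real.exp_mul]
      congr 1
      ring
    rw [heq, show (1:ℝ) = Real.exp 0 by simp]
    refine (Real.continuous_exp.tendsto 0).comp ?_
    have := (hne_lim.div_const p).neg
    simpa using this
  have hu_lim : Filter.Tendsto u Filter.atTop (nhds (p / D)) := by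
    have h1 : Filter.Tendsto (fun n => (1 - R n ^ (-((D - e n) / p))) / ((D - e n) / p))
        Filter.atTop (nhds ((1 - 0) / (D / p))) :=
      ((tendsto_const_nhds.sub hRδ_lim)).div hδ_lim (by positivity)
    have h2 := h1.mul hRε_lim
    rw [sub_zero, mul_one, one_div_div] at h2
    exact h2
  have := (ENNReal.continuous_ofReal.tendsto _).comp hu_lim
  exact le_of_tendsto this (Filter.Eventually.of_forall hbound)

/-- Weighted Hardy inequality:
`∫₀^∞ (Hf)^p x^α dx ≤ (p/(p-1-α))^p ∫₀^∞ f^p x^α dx`, with sharp constant `p/(p-1-α)`. -/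
theorem weighted_hardy_inequality_sharp (p α : ℝ) (hp : 1 < p) (hα : α < p - 1) :
    (∀ f : ℝ → ℝ≥0∞, Measurable f →
      (∫⁻ x in Ioi (0 : ℝ), hardyOp f x ^ p * ENNReal.ofReal (x ^ α))
        ≤ ENNReal.ofReal ((p / (p - 1 - α)) ^ p) *
          ∫⁻ x in Ioi (0 : ℝ), f x ^ p * ENNReal.ofReal (x ^ α)) ∧
    (∀ C : ℝ≥0∞,
      (∀ f : ℝ → ℝ≥0∞, Measurable f →
        (∫⁻ x in Ioi (0 : ℝ), hardyOp f x ^ p * ENNReal.ofReal (x ^ α))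
          ≤ C ^ p * ∫⁻ x in Ioi (0 : ℝ), f x ^ p * ENNReal.ofReal (x ^ α)) →
      ENNReal.ofReal (p / (p - 1 - α)) ≤ C) := by
  exact ⟨hardy_ineq p α hp hα, fun C hC => hardy_sharp p α hp hα C hC⟩
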